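/- arXiv:1405.3267 — 3 statements merged into one kernel-verified Lean document; each statement's English description precedes it below -/
import Mathlib

section
/- Let n be even, and let A, B be the two communities each of size n/2. If the maximum likelihood (min-bisection) estimator does not output the ground-truth partition (A,B), then there exists 1 ≤ k ≤ n/4 and sets A_w ⊆ A, B_w ⊆ B with |A_w| = |B_w| = k such that E(A_w, B∖B_w) + E(B_w, A∖A_w) ≥ E(A_w, A∖A_w) + E(B_w, B∖B_w), where E(S,T) counts the edges between vertex sets S and T. -/
/-- Number of edges of `G` between two (disjoint) vertex sets `S` and `T`. -/
def edgeCount {V : Type*} [Fintype V] [DecidableEq V] (G : SimpleGraph V)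
    [DecidableRel G.Adj] (S T : Finset V) : ℕ :=
  ((S ×ˢ T).filter fun p => G.Adj p.1 p.2).card

lemma edgeCount_comm {V : Type*} [Fintype V] [DecidableEq V] (G : SimpleGraph V)
    [DecidableRel G.Adj] (S T : Finset V) : edgeCount G S T = edgeCount G T S := by
  unfold edgeCount
  have h : (T ×ˢ S).filter (fun p => G.Adj p.1 p.2)
      = ((S ×ˢ T).filter fun p => G.Adj p.1 p.2).image Prod.swap := by
    ext ⟨a, b⟩
    simp only [Finset.mem_filter, Finset.mem_product, Finset.mem_image, Prod.exists,
      Prod.swap_prod_mk, Prod.mk.injEq]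
    constructor
    · rintro ⟨⟨ha, hb⟩, hadj⟩
      exact ⟨b, a, ⟨⟨hb, ha⟩, G.adj_symm hadj⟩, rfl, rfl⟩
    · rintro ⟨x, y, ⟨⟨hx, hy⟩, hadj⟩, rfl, rfl⟩
      exact ⟨⟨hy, hx⟩, G.adj_symm hadj⟩
  rw [h, Finset.card_image_of_injective _ Prod.swap_injective]

lemma edgeCount_union_left {V : Type*} [Fintype V] [DecidableEq V] (G : SimpleGraph V)
    [DecidableRel G.Adj] (S S' T : Finset V) (h : Disjoint S S') :
    edgeCount G (S ∪ S') T = edgeCount G S T + edgeCount G S' T := by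
  unfold edgeCount
  rw [Finset.union_product, Finset.filter_union, Finset.card_union_of_disjoint]
  apply Finset.disjoint_filter_filter
  rw [Finset.disjoint_left]
  rintro ⟨a, b⟩ hab hab'
  simp only [Finset.mem_product] at hab hab'
  exact (Finset.disjoint_left.mp h hab.1) hab'.1

lemma edgeCount_union_right {V : Type*} [Fintype V] [DecidableEq V] (G : SimpleGraph V)
    [DecidableRel G.Adj] (S T T' : Finset V) (h : Disjoint T T') :
    edgeCount G S (T ∪ T') = edgeCount G S T + edgeCount G S T' := by
  rw [edgeCount_comm, edgeCount_union_left G T T' S h, edgeCount_comm G T,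
    edgeCount_comm G T']

theorem stmt_10 {V : Type*} [Fintype V] [DecidableEq V] (G : SimpleGraph V)
    [DecidableRel G.Adj] (n : ℕ) (hn : Fintype.card V = n) (hneven : 2 ∣ n)
    (A B : Finset V) (hAB : Disjoint A B) (hABunion : A ∪ B = Finset.univ)
    (hA : A.card = n / 2)
    -- the min-bisection (maximum likelihood) estimator does not output (A,B):
    -- some balanced partition different from (A,B) has a cut at most as small
    (hML : ∃ Z : Finset V, Z.card = n / 2 ∧ Z ≠ A ∧ Z ≠ B ∧
      edgeCount G Z Zᶜ ≤ edgeCount G A B) :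
    ∃ k : ℕ, 1 ≤ k ∧ k ≤ n / 4 ∧
      ∃ Aw Bw : Finset V, Aw ⊆ A ∧ Bw ⊆ B ∧ Aw.card = k ∧ Bw.card = k ∧
        edgeCount G Aw (B \ Bw) + edgeCount G Bw (A \ Aw) ≥
          edgeCount G Aw (A \ Aw) + edgeCount G Bw (B \ Bw) := by
  obtain ⟨Z, hZcard, hZA, hZB, hZcut⟩ := hML
  set A1 := A ∩ Z with hA1
  set Aw := A \ Z with hAw
  set Bw := B ∩ Z with hBw
  set B1 := B \ Z with hB1
  -- basic set facts
  have hZdecomp : Z = A1 ∪ Bw := by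
    rw [hA1, hBw, ← Finset.union_inter_distrib_right, hABunion, Finset.univ_inter]
  have hZcdecomp : (Zᶜ : Finset V) = Aw ∪ B1 := by
    ext x
    have hx : x ∈ A ∪ B := hABunion ▸ Finset.mem_univ x
    simp only [Finset.mem_compl, hAw, hB1, Finset.mem_union, Finset.mem_sdiff]
    simp only [Finset.mem_union] at hx
    tauto
  have hAdecomp : A = Aw ∪ A1 := by
    rw [hAw, hA1]; exact (Finset.sdiff_union_inter A Z).symm
  have hBdecomp : B = Bw ∪ B1 := by
    rw [hBw, hB1]; ext x; simp only [Finset.mem_union, Finset.mem_inter, Finset.mem_sdiff]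
    tauto
  have hdA : Disjoint Aw A1 := by
    rw [hAw, hA1]; exact Finset.sdiff_disjoint.mono_right Finset.inter_subset_right
  have hdB : Disjoint Bw B1 := by
    rw [hBw, hB1]; exact (Finset.sdiff_disjoint.mono_right Finset.inter_subset_right).symm
  have hdZ : Disjoint A1 Bw := hAB.mono Finset.inter_subset_left Finset.inter_subset_left
  have hdZc : Disjoint Aw B1 := hAB.mono Finset.sdiff_subset Finset.sdiff_subset
  -- cardinalities
  have hcardA : Aw.card + A1.card = n / 2 := by
    rw [← hA, hAdecomp, Finset.card_union_of_disjoint hdA]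
  have hcardB : B.card = n - n / 2 := by
    have := Finset.card_union_of_disjoint hAB
    rw [hABunion, Finset.card_univ, hn] at this
    omega
  have hcardZ : A1.card + Bw.card = n / 2 := by
    rw [← hZcard, hZdecomp, Finset.card_union_of_disjoint hdZ]
  have hAwBw : Aw.card = Bw.card := by omega
  have hA1B1 : A1.card = B1.card := by
    have : Bw.card + B1.card = n - n / 2 := by
      rw [← hcardB, hBdecomp, Finset.card_union_of_disjoint hdB]
    omega
  have hAwpos : 1 ≤ Aw.card := by
    rcases Nat.eq_zero_or_pos Aw.card with h0 | h
    · exfalso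
      have : A ⊆ Z := by
        rw [← Finset.sdiff_eq_empty_iff_subset, ← hAw]
        exact Finset.card_eq_zero.mp h0
      exact hZA (Finset.eq_of_subset_of_card_le this (by omega)).symm
    · exact h
  have hA1pos : 1 ≤ A1.card := by
    rcases Nat.eq_zero_or_pos A1.card with h0 | h
    · exfalso
      have hBwcard : Bw.card = Z.card := by omega
      have : Z ⊆ B := by
        have : Bw = Z := Finset.eq_of_subset_of_card_le Finset.inter_subset_right
          (by omega)
        rw [← this]; exact Finset.inter_subset_left
      exact hZB (Finset.eq_of_subset_of_card_le this (by omega))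
    · exact h
  -- the cut inequality
  have hcutZ : edgeCount G Z Zᶜ =
      edgeCount G A1 Aw + edgeCount G A1 B1 + edgeCount G Bw Aw + edgeCount G Bw B1 := by
    rw [hZcdecomp, hZdecomp, edgeCount_union_left G _ _ _ hdZ,
      edgeCount_union_right G _ _ _ hdZc, edgeCount_union_right G _ _ _ hdZc]
    ring
  have hcutAB : edgeCount G A B =
      edgeCount G A1 Bw + edgeCount G A1 B1 + edgeCount G Aw Bw + edgeCount G Aw B1 := by
    rw [hAdecomp, hBdecomp, edgeCount_union_left G _ _ _ hdA,
      edgeCount_union_right G _ _ _ hdB, edgeCount_union_right G _ _ _ hdB]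
    ring
  have hsym : edgeCount G Bw Aw = edgeCount G Aw Bw := edgeCount_comm G Bw Aw
  have hkey : edgeCount G A1 Aw + edgeCount G Bw B1 ≤
      edgeCount G A1 Bw + edgeCount G Aw B1 := by
    rw [hcutZ, hcutAB] at hZcut; omega
  -- useful rewrites
  have hBsdBw : B \ Bw = B1 := by
    rw [hBw, hB1]; ext x
    simp only [Finset.mem_sdiff, Finset.mem_inter]; tauto
  have hAsdAw : A \ Aw = A1 := by
    rw [hAw, hA1]; ext x
    simp only [Finset.mem_sdiff, Finset.mem_inter, not_and, not_not]; tauto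
  have hBsdB1 : B \ B1 = Bw := by
    rw [hB1, hBw]; ext x
    simp only [Finset.mem_sdiff, Finset.mem_inter, not_and, not_not]; tauto
  have hAsdA1 : A \ A1 = Aw := by
    rw [hA1, hAw]; ext x
    simp only [Finset.mem_sdiff, Finset.mem_inter]; tauto
  by_cases hk : Aw.card ≤ n / 4
  · refine ⟨Aw.card, hAwpos, hk, Aw, Bw, Finset.sdiff_subset, Finset.inter_subset_left,
      rfl, hAwBw.symm, ?_⟩
    rw [hBsdBw, hAsdAw,
      edgeCount_comm G Bw A1, edgeCount_comm G Aw A1]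
    omega
  · refine ⟨A1.card, hA1pos, by omega, A1, B1, Finset.inter_subset_left,
      Finset.sdiff_subset, rfl, hA1B1.symm, ?_⟩
    rw [hBsdB1, hAsdA1, edgeCount_comm G B1 Aw, edgeCount_comm G B1 Bw]
    omega
end

section
/- Let B be a symmetric n×n real matrix with zero diagonal, g ∈ {±1}ⁿ, and let Y be the diagonal matrix with Y_{ii} = (B g g^T)_{ii}. If Y − B ⪰ 0, then X = g gᵀ is an optimal solution of the SDP: maximize Tr(BX) subject to X_{ii} = 1 for all i and X ⪰ 0. If in addition the second smallest eigenvalue of Y − B is strictly positive (i.e., the kernel of Y − B is spanned by g), then g gᵀ is the unique optimal solution. -/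
open Matrix in
private lemma trace_transpose_mul_self_aux {n : ℕ} (A : Matrix (Fin n) (Fin n) ℝ) :
    (Aᵀ * A).trace = ∑ j, ∑ i, A i j ^ 2 := by
  simp [Matrix.trace, Matrix.mul_apply, Matrix.diag, sq]

open Matrix MatrixOrder in
private lemma trace_mul_psd {n : ℕ} {M X : Matrix (Fin n) (Fin n) ℝ}
    (hM : M.PosSemidef) (hX : X.PosSemidef) :
    0 ≤ (M * X).trace ∧ ((M * X).trace = 0 → M * X = 0) := by
  set S := CFC.sqrt M with hS
  set T := CFC.sqrt X with hT
  have hSsym : Sᵀ = S := (CFC.sqrt_nonneg M).posSemidef.isHermitian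
  have hTsym : Tᵀ = T := (CFC.sqrt_nonneg X).posSemidef.isHermitian
  have hMX : M * X = S * (S * T) * T := by
    rw [show S * (S * T) * T = (S * S) * (T * T) by noncomm_ring,
      CFC.sqrt_mul_sqrt_self M hM.nonneg, CFC.sqrt_mul_sqrt_self X hX.nonneg]
  have hid : (S * T)ᵀ * (S * T) = T * (S * (S * T)) := by
    rw [Matrix.transpose_mul, hSsym, hTsym]; noncomm_ring
  have htr : (M * X).trace = ((S * T)ᵀ * (S * T)).trace := by
    rw [hMX, Matrix.trace_mul_comm, hid]
  rw [htr, trace_transpose_mul_self_aux]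
  constructor
  · exact Finset.sum_nonneg fun j _ => Finset.sum_nonneg fun i _ => sq_nonneg _
  · intro h
    have hST : S * T = 0 := by
      ext i j
      have h1 : ∀ j ∈ Finset.univ, (0:ℝ) ≤ ∑ i, (S * T) i j ^ 2 :=
        fun j _ => Finset.sum_nonneg fun i _ => sq_nonneg _
      have h2 := (Finset.sum_eq_zero_iff_of_nonneg h1).mp h j (Finset.mem_univ j)
      have h3 := (Finset.sum_eq_zero_iff_of_nonneg
        (fun i _ => sq_nonneg ((S * T) i j))).mp h2 i (Finset.mem_univ i)
      simpa using pow_eq_zero_iff (n := 2) (by norm_num) |>.mp h3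
    rw [hMX, hST, Matrix.mul_zero, Matrix.zero_mul]

theorem stmt_16 (n : ℕ) (B : Matrix (Fin n) (Fin n) ℝ)
    (hBsym : B.IsSymm) (hBdiag : ∀ i, B i i = 0)
    (g : Fin n → ℝ) (hg : ∀ i, g i = 1 ∨ g i = -1)
    (Y : Matrix (Fin n) (Fin n) ℝ)
    (hY : Y = Matrix.diagonal fun i => (B * Matrix.vecMulVec g g) i i)
    (hpsd : (Y - B).PosSemidef) :
    (∀ X : Matrix (Fin n) (Fin n) ℝ, X.PosSemidef → (∀ i, X i i = 1) →
      (B * X).trace ≤ (B * Matrix.vecMulVec g g).trace) ∧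
    ((∀ v : Fin n → ℝ, (Y - B).mulVec v = 0 → ∃ c : ℝ, v = c • g) →
      ∀ X : Matrix (Fin n) (Fin n) ℝ, X.PosSemidef → (∀ i, X i i = 1) →
        (B * X).trace = (B * Matrix.vecMulVec g g).trace →
        X = Matrix.vecMulVec g g) := by
  have hgsq : ∀ i, g i * g i = 1 := by
    intro i; rcases hg i with h | h <;> rw [h] <;> norm_num
  -- trace of B * ggᵀ equals trace of Y
  have htrBg : (B * Matrix.vecMulVec g g).trace = Y.trace := by
    rw [hY, Matrix.trace_diagonal]
    rfl
  -- trace (Y * X) = trace Y when X has unit diagonal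
  have htrYX : ∀ X : Matrix (Fin n) (Fin n) ℝ, (∀ i, X i i = 1) →
      (Y * X).trace = Y.trace := by
    intro X hXd
    rw [hY, Matrix.trace_diagonal]
    simp [Matrix.trace, Matrix.diag, Matrix.diagonal_mul, hXd]
  have key : ∀ X : Matrix (Fin n) (Fin n) ℝ, X.PosSemidef → (∀ i, X i i = 1) →
      (B * X).trace = Y.trace - ((Y - B) * X).trace := by
    intro X hX hXd
    rw [Matrix.sub_mul, Matrix.trace_sub, htrYX X hXd]
    ring
  constructor
  · intro X hX hXd
    rw [htrBg, key X hX hXd]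
    have := (trace_mul_psd hpsd hX).1
    linarith
  · intro hker X hX hXd htr
    have h0 : ((Y - B) * X).trace = 0 := by
      have := key X hX hXd
      rw [htr, htrBg] at this
      linarith
    have hMX0 : (Y - B) * X = 0 := (trace_mul_psd hpsd hX).2 h0
    -- each column of X is a multiple of g
    have hcol : ∀ j, ∃ c : ℝ, (fun i => X i j) = c • g := by
      intro j
      apply hker
      ext i
      have : ((Y - B) * X) i j = 0 := by rw [hMX0]; rfl
      simpa [Matrix.mul_apply, Matrix.mulVec, dotProduct] using this
    ext i j
    obtain ⟨c, hc⟩ := hcol j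
    have hXij : X i j = c * g i := congrFun hc i
    have hXjj : X j j = c * g j := congrFun hc j
    have hc1 : c * g j = 1 := by rw [← hXjj, hXd j]
    have hcg : c = g j := by
      have := congrArg (· * g j) hc1
      simpa [mul_assoc, hgsq j] using this
    rw [hXij, hcg, Matrix.vecMulVec_apply]
    ring
end

section
/- For a random graph on m = ⌊n/(log n)³⌋ vertices where each edge appears independently with probability α·log(n)/n (α > 0 fixed), the probability that some vertex has degree at least log(n)/log log(n) is at most exp(−(2 − o(1))·log n); in particular, for sufficiently large n, with probability at least 9/10 every vertex has degree strictly less than log(n)/log log(n). -/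
open ProbabilityTheory MeasureTheory Filter
open scoped ENNReal

noncomputable def kq (n : ℕ) : ℕ := ⌈Real.log n / Real.log (Real.log n)⌉₊
noncomputable def Bq (α : ℝ) (n : ℕ) : ℝ :=
  ((Nat.floor ((n : ℝ) / (Real.log n) ^ 3) : ℕ) : ℝ) ^ (kq n + 1) *
    (α * Real.log n / n) ^ (kq n) / (Nat.factorial (kq n))
noncomputable def fq (α : ℝ) (n : ℕ) : ℝ := 2 + Real.log (Bq α n) / Real.log n

lemma log_factorial_ge (k : ℕ) : (k : ℝ) * Real.log k - k ≤ Real.log (Nat.factorial k) := by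
  rcases Nat.eq_zero_or_pos k with h | hk
  · simp [h]
  have h1 : ((k : ℝ)) ^ k / (Nat.factorial k) ≤ Real.exp k := by
    calc ((k : ℝ)) ^ k / (Nat.factorial k)
        ≤ ∑ i ∈ Finset.range (k + 1), (k : ℝ) ^ i / (Nat.factorial i) := by
          refine Finset.single_le_sum (f := fun i => (k : ℝ) ^ i / (Nat.factorial i)) ?_ ?_
          · intro i _; positivity
          · simp
      _ ≤ Real.exp k := Real.sum_le_exp_of_nonneg (by positivity) _
  have hkpos : (0 : ℝ) < k := by exact_mod_cast hk
  have h2 : Real.log ((k : ℝ) ^ k / (Nat.factorial k)) ≤ (k : ℝ) := by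
    have := Real.log_le_log (by positivity) h1
    rwa [Real.log_exp] at this
  rw [Real.log_div (by positivity) (by positivity), Real.log_pow] at h2
  push_cast at h2 ⊢
  linarith

lemma log_factorial_le (k : ℕ) : Real.log (Nat.factorial k) ≤ (k : ℝ) * Real.log k := by
  rcases Nat.eq_zero_or_pos k with h | h
  · simp [h]
  have : (Nat.factorial k : ℝ) ≤ (k : ℝ) ^ k := by exact_mod_cast Nat.factorial_le_pow k
  calc Real.log (Nat.factorial k) ≤ Real.log ((k : ℝ) ^ k) :=
        Real.log_le_log (by positivity) this
    _ = (k : ℝ) * Real.log k := Real.log_pow k k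

lemma logB_bounds (α : ℝ) (hα : 0 < α) (n : ℕ) (h1 : 2 ≤ Real.log n)
    (h2 : 2 ≤ Real.log (Real.log n)) (h3 : 2 ≤ (n : ℝ) / (Real.log n) ^ 3) :
    ((Real.log n - 3 * Real.log (Real.log n) - 1) +
        (Real.log α - 1) * (kq n : ℝ) - 3 * ((kq n : ℝ) * Real.log (Real.log n))
      ≤ Real.log (Bq α n)) ∧
    (Real.log (Bq α n) ≤ Real.log n + (Real.log α + 1) * (kq n : ℝ) +
        (kq n : ℝ) * Real.log (Real.log (Real.log n)) -
        3 * ((kq n : ℝ) * Real.log (Real.log n))) := by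
  set L : ℝ := Real.log n with hLdef
  set LL : ℝ := Real.log L with hLLdef
  set L3 : ℝ := Real.log LL with hL3def
  set M : ℕ := Nat.floor ((n : ℝ) / L ^ 3) with hMdef
  set k : ℕ := kq n with hkdef
  set K : ℝ := (k : ℝ) with hKdef
  have hL0 : (0:ℝ) < L := by linarith
  have hLL0 : (0:ℝ) < LL := by linarith
  have hn1 : (1:ℝ) ≤ (n:ℝ) := by
    by_contra h
    push_neg at h
    have := Real.log_nonpos (Nat.cast_nonneg n) (le_of_lt h)
    rw [← hLdef] at this
    linarith
  have hn0 : (0:ℝ) < (n:ℝ) := by linarith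
  have hM1 : 1 ≤ M := by
    refine Nat.le_floor ?_
    push_cast
    linarith
  have hM0 : (0:ℝ) < (M:ℝ) := by exact_mod_cast hM1
  have hk1 : 1 ≤ k := by
    rw [hkdef, kq]
    rw [Nat.one_le_ceil_iff]
    rw [← hLdef, ← hLLdef]
    positivity
  have hK1 : (1:ℝ) ≤ K := by rw [hKdef]; exact_mod_cast hk1
  have hK0 : (0:ℝ) < K := by linarith
  have hKge : L / LL ≤ K := by
    rw [hKdef, hkdef, kq, ← hLdef, ← hLLdef]
    exact Nat.le_ceil _
  have hKle : K ≤ L / LL + 1 := by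
    rw [hKdef, hkdef, kq, ← hLdef, ← hLLdef]
    exact le_of_lt (Nat.ceil_lt_add_one (by positivity))
  have hKleL : K ≤ L := by
    have hd : L / LL ≤ L / 2 := div_le_div_of_nonneg_left (le_of_lt hL0) (by norm_num) h2
    have : L / 2 + 1 ≤ L := by linarith
    linarith
  -- log M bounds
  have hMle : (M:ℝ) ≤ (n:ℝ) / L ^ 3 := Nat.floor_le (by positivity)
  have hlognL : Real.log ((n:ℝ) / L ^ 3) = L - 3 * LL := by
    rw [Real.log_div (by positivity) (by positivity), Real.log_pow, ← hLdef, ← hLLdef]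
    push_cast
    ring
  have hlogM_le : Real.log M ≤ L - 3 * LL := by
    rw [← hlognL]
    exact Real.log_le_log hM0 hMle
  have hlogM_ge : L - 3 * LL - 1 ≤ Real.log M := by
    have hfl := Nat.lt_floor_add_one ((n:ℝ) / L ^ 3)
    rw [← hMdef] at hfl
    have hMge : (n:ℝ) / L ^ 3 / 2 ≤ (M:ℝ) := by linarith
    have hlog := Real.log_le_log (by positivity) hMge
    rw [Real.log_div (by positivity) (by norm_num), hlognL] at hlog
    have hlog2 : Real.log 2 ≤ 1 := by
      have := Real.log_two_lt_d9
      linarith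
    linarith
  -- log p
  have hlogp : Real.log (α * L / n) = Real.log α + LL - L := by
    rw [Real.log_div (by positivity) (by positivity),
      Real.log_mul (ne_of_gt hα) (ne_of_gt hL0), ← hLdef, ← hLLdef]
  -- log K bounds
  have hlogK_ge : LL - L3 ≤ Real.log K := by
    have h := Real.log_le_log (by positivity : (0:ℝ) < L / LL) hKge
    rw [Real.log_div (ne_of_gt hL0) (ne_of_gt hLL0), ← hLLdef, ← hL3def] at h
    linarith
  have hlogK_le : Real.log K ≤ LL := by
    have h := Real.log_le_log hK0 hKleL
    rw [← hLLdef] at h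
    exact h
  -- log Bq
  have hlogB : Real.log (Bq α n) =
      (K + 1) * Real.log M + K * Real.log (α * L / n) - Real.log (Nat.factorial k) := by
    have hBq : Bq α n = (M:ℝ) ^ (k + 1) * (α * L / n) ^ k / (Nat.factorial k) := by
      rw [Bq, ← hLdef, ← hMdef, ← hkdef]
    rw [hBq, Real.log_div (by positivity) (by positivity),
      Real.log_mul (by positivity) (by positivity), Real.log_pow, Real.log_pow]
    push_cast
    ring
  have t5 := log_factorial_ge k
  have t6 := log_factorial_le k
  rw [← hKdef] at t5 t6
  constructor
  · -- lower bound
    have t3 : (K + 1) * (L - 3 * LL - 1) ≤ (K + 1) * Real.log M :=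
      mul_le_mul_of_nonneg_left hlogM_ge (by linarith)
    have t4 : Real.log (Nat.factorial k) ≤ K * LL :=
      le_trans t6 (mul_le_mul_of_nonneg_left hlogK_le (le_of_lt hK0))
    rw [hlogB, hlogp]
    nlinarith [t3, t4, hK0]
  · -- upper bound
    have t1 : (K + 1) * Real.log M ≤ (K + 1) * (L - 3 * LL) :=
      mul_le_mul_of_nonneg_left hlogM_le (by linarith)
    have t2 : K * (LL - L3) ≤ K * Real.log K :=
      mul_le_mul_of_nonneg_left hlogK_ge (le_of_lt hK0)
    calc Real.log (Bq α n)
        = (K + 1) * Real.log M + K * (Real.log α + LL - L) - Real.log (Nat.factorial k) := by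
          rw [hlogB, hlogp]
      _ ≤ (K + 1) * (L - 3 * LL) + K * (Real.log α + LL - L) - (K * Real.log K - K) := by
          linarith [t1, t5]
      _ ≤ (K + 1) * (L - 3 * LL) + K * (Real.log α + LL - L) - (K * (LL - L3) - K) := by
          have := mul_le_mul_of_nonneg_left hlogK_ge (le_of_lt hK0)
          linarith
      _ = L + (Real.log α + 1) * K + K * L3 - 3 * (K * LL) - 3 * LL := by ring
      _ ≤ L + (Real.log α + 1) * K + K * L3 - 3 * (K * LL) := by linarith

lemma tendsto_fq (α : ℝ) (hα : 0 < α) : Tendsto (fq α) atTop (nhds 0) := by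
  have hlogN : Tendsto (fun n : ℕ => Real.log n) atTop atTop :=
    Real.tendsto_log_atTop.comp tendsto_natCast_atTop_atTop
  have hLL : Tendsto (fun n : ℕ => Real.log (Real.log n)) atTop atTop :=
    Real.tendsto_log_atTop.comp hlogN
  have hdiv : Tendsto (fun x : ℝ => Real.log x / x) atTop (nhds 0) :=
    Real.isLittleO_log_id_atTop.tendsto_div_nhds_zero
  have hLLL : Tendsto (fun n : ℕ => Real.log (Real.log n) / Real.log n) atTop (nhds 0) :=
    hdiv.comp hlogN
  have hL3LL : Tendsto (fun n : ℕ =>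
      Real.log (Real.log (Real.log n)) / Real.log (Real.log n)) atTop (nhds 0) :=
    hdiv.comp hLL
  have hinvLL : Tendsto (fun n : ℕ => (Real.log (Real.log n))⁻¹) atTop (nhds 0) :=
    tendsto_inv_atTop_zero.comp hLL
  have hinvL : Tendsto (fun n : ℕ => (Real.log n)⁻¹) atTop (nhds 0) :=
    tendsto_inv_atTop_zero.comp hlogN
  have e1 : ∀ᶠ n : ℕ in atTop, 2 ≤ Real.log n := hlogN.eventually_ge_atTop 2
  have e2 : ∀ᶠ n : ℕ in atTop, 2 ≤ Real.log (Real.log n) := hLL.eventually_ge_atTop 2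
  have hnL3 : Tendsto (fun n : ℕ => (n:ℝ) / (Real.log n) ^ 3) atTop atTop := by
    have h := (Real.tendsto_exp_div_pow_atTop 3).comp hlogN
    refine h.congr' ?_
    filter_upwards [eventually_ge_atTop 1] with n hn
    have hn0 : (0:ℝ) < (n:ℝ) := by exact_mod_cast hn
    simp only [Function.comp_apply]
    rw [Real.exp_log hn0]
  have e3 : ∀ᶠ n : ℕ in atTop, 2 ≤ (n:ℝ) / (Real.log n) ^ 3 := hnL3.eventually_ge_atTop 2
  -- k * LL / L → 1
  have hKLL : Tendsto (fun n : ℕ =>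
      (kq n : ℝ) * Real.log (Real.log n) / Real.log n) atTop (nhds 1) := by
    have hup : Tendsto (fun n : ℕ => 1 + Real.log (Real.log n) / Real.log n) atTop (nhds 1) := by
      have := tendsto_const_nhds (x := (1:ℝ)) (f := atTop (α := ℕ)) |>.add hLLL
      simpa using this
    refine tendsto_of_tendsto_of_tendsto_of_le_of_le' tendsto_const_nhds hup ?_ ?_
    · filter_upwards [e1, e2] with n h1 h2
      have hL0 : (0:ℝ) < Real.log n := by linarith
      have hLL0 : (0:ℝ) < Real.log (Real.log n) := by linarith
      rw [le_div_iff₀ hL0]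
      have hKge : Real.log n / Real.log (Real.log n) ≤ (kq n : ℝ) := Nat.le_ceil _
      have := (div_le_iff₀ hLL0).1 hKge
      linarith
    · filter_upwards [e1, e2] with n h1 h2
      have hL0 : (0:ℝ) < Real.log n := by linarith
      have hLL0 : (0:ℝ) < Real.log (Real.log n) := by linarith
      have hKle : (kq n : ℝ) ≤ Real.log n / Real.log (Real.log n) + 1 :=
        le_of_lt (Nat.ceil_lt_add_one (by positivity))
      have h4 : ((kq n : ℝ) - 1) * Real.log (Real.log n) ≤ Real.log n := by
        rw [← le_div_iff₀ hLL0]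
        linarith
      rw [div_le_iff₀ hL0]
      have hexp : (1 + Real.log (Real.log n) / Real.log n) * Real.log n =
          Real.log n + Real.log (Real.log n) := by
        field_simp
      rw [hexp]
      nlinarith [h4]
  have hKoverL : Tendsto (fun n : ℕ => (kq n : ℝ) / Real.log n) atTop (nhds 0) := by
    have h := hKLL.mul hinvLL
    rw [mul_zero] at h
    refine Tendsto.congr' ?_ h
    filter_upwards [e2] with n h2
    have hLL0 : (0:ℝ) < Real.log (Real.log n) := by linarith
    rw [div_mul_eq_mul_div, mul_assoc, mul_inv_cancel₀ (ne_of_gt hLL0), mul_one]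
  have hKL3 : Tendsto (fun n : ℕ =>
      (kq n : ℝ) * Real.log (Real.log (Real.log n)) / Real.log n) atTop (nhds 0) := by
    have h := hKLL.mul hL3LL
    rw [one_mul] at h
    refine Tendsto.congr' ?_ h
    filter_upwards [e1, e2] with n h1 h2
    have hL0 : (0:ℝ) ≠ Real.log n := by linarith
    have hLL0 : (0:ℝ) < Real.log (Real.log n) := by linarith
    field_simp
  -- limits of the bounding sequences
  have hU : Tendsto (fun n : ℕ => 1 + (Real.log α + 1) * ((kq n : ℝ) / Real.log n) +
      (kq n : ℝ) * Real.log (Real.log (Real.log n)) / Real.log n -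
      3 * ((kq n : ℝ) * Real.log (Real.log n) / Real.log n)) atTop (nhds (-2)) := by
    have h := (((tendsto_const_nhds (x := (1:ℝ)) (f := atTop (α := ℕ))).add
      (hKoverL.const_mul (Real.log α + 1))).add hKL3).sub (hKLL.const_mul 3)
    norm_num at h
    exact h
  have hV : Tendsto (fun n : ℕ => 1 - 3 * (Real.log (Real.log n) / Real.log n) -
      (Real.log n)⁻¹ + (Real.log α - 1) * ((kq n : ℝ) / Real.log n) -
      3 * ((kq n : ℝ) * Real.log (Real.log n) / Real.log n)) atTop (nhds (-2)) := by
    have h := ((((tendsto_const_nhds (x := (1:ℝ)) (f := atTop (α := ℕ))).sub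
      (hLLL.const_mul 3)).sub hinvL).add
      (hKoverL.const_mul (Real.log α - 1))).sub (hKLL.const_mul 3)
    norm_num at h
    exact h
  have hg : Tendsto (fun n : ℕ => Real.log (Bq α n) / Real.log n) atTop (nhds (-2)) := by
    refine tendsto_of_tendsto_of_tendsto_of_le_of_le' hV hU ?_ ?_
    · filter_upwards [e1, e2, e3] with n h1 h2 h3
      have hL0 : (0:ℝ) < Real.log n := by linarith
      have hlo := (logB_bounds α hα n h1 h2 h3).1
      rw [le_div_iff₀ hL0]
      have hexp : (1 - 3 * (Real.log (Real.log n) / Real.log n) - (Real.log n)⁻¹ +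
          (Real.log α - 1) * ((kq n : ℝ) / Real.log n) -
          3 * ((kq n : ℝ) * Real.log (Real.log n) / Real.log n)) * Real.log n =
          (Real.log n - 3 * Real.log (Real.log n) - 1) +
          (Real.log α - 1) * (kq n : ℝ) - 3 * ((kq n : ℝ) * Real.log (Real.log n)) := by
        field_simp
      rw [hexp]
      exact hlo
    · filter_upwards [e1, e2, e3] with n h1 h2 h3
      have hL0 : (0:ℝ) < Real.log n := by linarith
      have hhi := (logB_bounds α hα n h1 h2 h3).2
      rw [div_le_iff₀ hL0]
      have hexp : (1 + (Real.log α + 1) * ((kq n : ℝ) / Real.log n) +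
          (kq n : ℝ) * Real.log (Real.log (Real.log n)) / Real.log n -
          3 * ((kq n : ℝ) * Real.log (Real.log n) / Real.log n)) * Real.log n =
          Real.log n + (Real.log α + 1) * (kq n : ℝ) +
          (kq n : ℝ) * Real.log (Real.log (Real.log n)) -
          3 * ((kq n : ℝ) * Real.log (Real.log n)) := by
        field_simp
      rw [hexp]
      exact hhi
  have h := (tendsto_const_nhds (x := (2:ℝ)) (f := atTop (α := ℕ))).add hg
  norm_num at h
  exact h

lemma stmt_aux (α : ℝ) (hα : 0 < α) :
    ∀ᶠ n : ℕ in atTop, (2 ≤ Real.log n ∧ 2 ≤ Real.log (Real.log n) ∧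
      2 ≤ (n : ℝ) / (Real.log n) ^ 3) ∧ fq α n ≤ 1/2 ∧ 10 ≤ n := by
  have hlogN : Tendsto (fun n : ℕ => Real.log n) atTop atTop :=
    Real.tendsto_log_atTop.comp tendsto_natCast_atTop_atTop
  have hLL : Tendsto (fun n : ℕ => Real.log (Real.log n)) atTop atTop :=
    Real.tendsto_log_atTop.comp hlogN
  have hnL3 : Tendsto (fun n : ℕ => (n:ℝ) / (Real.log n) ^ 3) atTop atTop := by
    have h := (Real.tendsto_exp_div_pow_atTop 3).comp hlogN
    refine h.congr' ?_
    filter_upwards [eventually_ge_atTop 1] with n hn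
    have hn0 : (0:ℝ) < (n:ℝ) := by exact_mod_cast hn
    simp only [Function.comp_apply]
    rw [Real.exp_log hn0]
  filter_upwards [hlogN.eventually_ge_atTop 2, hLL.eventually_ge_atTop 2,
    hnL3.eventually_ge_atTop 2,
    (tendsto_fq α hα).eventually_le_const (by norm_num : (0:ℝ) < 1/2),
    eventually_ge_atTop 10] with n h1 h2 h3 h4 h5
  exact ⟨⟨h1, h2, h3⟩, h4, h5⟩

lemma prob_bound (α : ℝ) (hα : 0 < α) (n : ℕ) (hL : 0 ≤ Real.log n)
    (Ω : Type) (mΩ : MeasurableSpace Ω) (μ : Measure Ω) (hμ : IsProbabilityMeasure μ)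
    (X : Fin (Nat.floor ((n : ℝ) / (Real.log n) ^ 3)) →
         Fin (Nat.floor ((n : ℝ) / (Real.log n) ^ 3)) → Ω → Bool)
    (hsym : ∀ u v, X u v = X v u)
    (hind : iIndepFun
      (fun p : {q : Fin (Nat.floor ((n : ℝ) / (Real.log n) ^ 3)) ×
                    Fin (Nat.floor ((n : ℝ) / (Real.log n) ^ 3)) // q.1 < q.2} =>
        X p.1.1 p.1.2) μ)
    (hedge : ∀ u v, u ≠ v → μ {ω | X u v ω = true} = ENNReal.ofReal (α * Real.log n / n)) :
    μ {ω | ∃ v, Real.log n / Real.log (Real.log n) ≤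
        ((Finset.univ.filter fun u => u ≠ v ∧ X u v ω = true).card : ℝ)} ≤
      ENNReal.ofReal (Bq α n) := by
  classical
  set k : ℕ := kq n with hk
  set p : ℝ := α * Real.log n / n with hp
  have hp0 : 0 ≤ p := by
    have : (0:ℝ) ≤ (n:ℝ) := by positivity
    positivity
  set A : Fin (Nat.floor ((n : ℝ) / (Real.log n) ^ 3)) →
      Fin (Nat.floor ((n : ℝ) / (Real.log n) ^ 3)) → Set Ω :=
    fun v u => {ω | X u v ω = true} with hA
  set F : Fin (Nat.floor ((n : ℝ) / (Real.log n) ^ 3)) → Set Ω := fun v =>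
    ⋃ S ∈ Finset.powersetCard k (Finset.univ.erase v), ⋂ u ∈ S, A v u with hF
  have hsub : {ω | ∃ v, Real.log n / Real.log (Real.log n) ≤
      ((Finset.univ.filter fun u => u ≠ v ∧ X u v ω = true).card : ℝ)} ⊆ ⋃ v, F v := by
    rintro ω ⟨v, hv⟩
    have hkle : k ≤ (Finset.univ.filter fun u => u ≠ v ∧ X u v ω = true).card :=
      Nat.ceil_le.2 hv
    obtain ⟨S, hST, hcard⟩ := Finset.exists_subset_card_eq hkle
    have hSmem : S ∈ Finset.powersetCard k (Finset.univ.erase v) := by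
      refine Finset.mem_powersetCard.2 ⟨?_, hcard⟩
      intro u hu
      have := hST hu
      rw [Finset.mem_filter] at this
      exact Finset.mem_erase.2 ⟨this.2.1, Finset.mem_univ u⟩
    have hωmem : ω ∈ ⋂ u ∈ S, A v u := by
      refine Set.mem_biInter ?_
      intro u hu
      have := hST hu
      rw [Finset.mem_filter] at this
      exact this.2.2
    exact Set.mem_iUnion.2 ⟨v, Set.mem_biUnion hSmem hωmem⟩
  have hinter : ∀ (v : Fin (Nat.floor ((n : ℝ) / (Real.log n) ^ 3)))
      (S : Finset (Fin (Nat.floor ((n : ℝ) / (Real.log n) ^ 3)))),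
      S ∈ Finset.powersetCard k (Finset.univ.erase v) →
      μ (⋂ u ∈ S, A v u) ≤ ENNReal.ofReal p ^ k := by
    intro v S hS
    rw [Finset.mem_powersetCard] at hS
    obtain ⟨hSsub, hScard⟩ := hS
    have hne : ∀ u ∈ S, u ≠ v := fun u hu => (Finset.mem_erase.1 (hSsub hu)).1
    rcases S.eq_empty_or_nonempty with rfl | ⟨u₀, hu₀⟩
    · simp only [Finset.card_empty] at hScard
      simp [← hScard]
    · haveI hne' : Nonempty {q : Fin (Nat.floor ((n : ℝ) / (Real.log n) ^ 3)) ×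
          Fin (Nat.floor ((n : ℝ) / (Real.log n) ^ 3)) // q.1 < q.2} := by
        rcases lt_or_gt_of_ne (hne u₀ hu₀) with h | h
        · exact ⟨⟨(u₀, v), h⟩⟩
        · exact ⟨⟨(v, u₀), h⟩⟩
      set ee : Fin (Nat.floor ((n : ℝ) / (Real.log n) ^ 3)) →
          {q : Fin (Nat.floor ((n : ℝ) / (Real.log n) ^ 3)) ×
            Fin (Nat.floor ((n : ℝ) / (Real.log n) ^ 3)) // q.1 < q.2} := fun u =>
        if h : u < v then ⟨(u, v), h⟩ else if h' : v < u then ⟨(v, u), h'⟩ else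
          Classical.arbitrary _ with hee
      have hinj : Set.InjOn ee S := by
        intro a ha b hb hab
        rcases lt_or_gt_of_ne (hne a ha) with h1 | h1 <;>
          rcases lt_or_gt_of_ne (hne b hb) with h2 | h2
        · simp only [hee, dif_pos h1, dif_pos h2, Subtype.mk.injEq, Prod.mk.injEq] at hab
          exact hab.1
        · simp only [hee, dif_pos h1, dif_neg (asymm h2), dif_pos h2, Subtype.mk.injEq,
            Prod.mk.injEq] at hab
          exact absurd hab.1 (hne a ha)
        · simp only [hee, dif_neg (asymm h1), dif_pos h1, dif_pos h2, Subtype.mk.injEq,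
            Prod.mk.injEq] at hab
          exact absurd hab.2 (hne a ha)
        · simp only [hee, dif_neg (asymm h1), dif_pos h1, dif_neg (asymm h2), dif_pos h2,
            Subtype.mk.injEq, Prod.mk.injEq] at hab
          exact hab.2
      have hAe : ∀ u ∈ S, A v u = {ω | X (ee u).1.1 (ee u).1.2 ω = true} := by
        intro u hu
        rcases lt_or_gt_of_ne (hne u hu) with h | h
        · simp [hee, dif_pos h, hA]
        · simp only [hee, dif_neg (asymm h), dif_pos h, hA]
          rw [hsym u v]
      have hre : (⋂ u ∈ S, A v u) =
          ⋂ q ∈ S.image ee, {ω | X q.1.1 q.1.2 ω = true} := by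
        rw [Finset.set_biInter_finset_image]
        exact Set.iInter₂_congr hAe
      rw [hre]
      have hmeas := hind.meas_biInter (S := S.image ee)
        (s := fun q => {ω | X q.1.1 q.1.2 ω = true}) ?hmeas
      case hmeas =>
        intro q _
        refine ⟨{true}, trivial, ?_⟩
        ext ω; simp [Set.preimage]
      rw [hmeas]
      have hμq : ∀ q ∈ S.image ee, μ {ω | X q.1.1 q.1.2 ω = true} = ENNReal.ofReal p := by
        intro q _
        exact hedge q.1.1 q.1.2 (ne_of_lt q.2)
      rw [Finset.prod_congr rfl hμq, Finset.prod_const,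
        Finset.card_image_of_injOn hinj, hScard]
  have hcard_erase : ∀ v : Fin (Nat.floor ((n : ℝ) / (Real.log n) ^ 3)),
      (Finset.univ.erase v).card = Nat.floor ((n : ℝ) / (Real.log n) ^ 3) - 1 := by
    intro v
    rw [Finset.card_erase_of_mem (Finset.mem_univ v), Finset.card_univ, Fintype.card_fin]
  have hFv : ∀ v : Fin (Nat.floor ((n : ℝ) / (Real.log n) ^ 3)), μ (F v) ≤
      (Nat.choose (Nat.floor ((n : ℝ) / (Real.log n) ^ 3) - 1) k : ℝ≥0∞) *
        ENNReal.ofReal p ^ k := by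
    intro v
    calc μ (F v) ≤ ∑ S ∈ Finset.powersetCard k (Finset.univ.erase v), μ (⋂ u ∈ S, A v u) :=
          measure_biUnion_finset_le _ _
      _ ≤ ∑ S ∈ Finset.powersetCard k (Finset.univ.erase v), ENNReal.ofReal p ^ k :=
          Finset.sum_le_sum (hinter v)
      _ = _ := by
          rw [Finset.sum_const, Finset.card_powersetCard, hcard_erase, nsmul_eq_mul]
  calc μ {ω | ∃ v, Real.log n / Real.log (Real.log n) ≤
        ((Finset.univ.filter fun u => u ≠ v ∧ X u v ω = true).card : ℝ)}
      ≤ μ (⋃ v, F v) := measure_mono hsub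
    _ ≤ ∑' v, μ (F v) := measure_iUnion_le _
    _ ≤ ∑' _v : Fin (Nat.floor ((n : ℝ) / (Real.log n) ^ 3)),
          ((Nat.choose (Nat.floor ((n : ℝ) / (Real.log n) ^ 3) - 1) k : ℝ≥0∞) *
            ENNReal.ofReal p ^ k) :=
        ENNReal.tsum_le_tsum hFv
    _ = ((Nat.floor ((n : ℝ) / (Real.log n) ^ 3) : ℕ) : ℝ≥0∞) *
          ((Nat.choose (Nat.floor ((n : ℝ) / (Real.log n) ^ 3) - 1) k : ℝ≥0∞) *
            ENNReal.ofReal p ^ k) := by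
        rw [tsum_fintype, Finset.sum_const, Finset.card_univ, Fintype.card_fin, nsmul_eq_mul]
    _ ≤ ENNReal.ofReal (Bq α n) := by
        set M : ℕ := Nat.floor ((n : ℝ) / (Real.log n) ^ 3) with hM
        rw [← ENNReal.ofReal_pow hp0, ← ENNReal.ofReal_natCast (Nat.choose (M-1) k),
          ← ENNReal.ofReal_natCast M, ← ENNReal.ofReal_mul (by positivity),
          ← ENNReal.ofReal_mul (by positivity)]
        refine ENNReal.ofReal_le_ofReal ?_
        have h1 : Nat.factorial k * Nat.choose (M - 1) k ≤ M ^ k := by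
          calc Nat.factorial k * Nat.choose (M - 1) k = (M - 1).descFactorial k :=
              (Nat.descFactorial_eq_factorial_mul_choose _ _).symm
            _ ≤ (M - 1) ^ k := Nat.descFactorial_le_pow _ _
            _ ≤ M ^ k := Nat.pow_le_pow_left (Nat.sub_le M 1) k
        have hC : ((Nat.choose (M - 1) k : ℝ)) * (Nat.factorial k : ℝ) ≤ (M : ℝ) ^ k := by
          calc ((Nat.choose (M - 1) k : ℝ)) * (Nat.factorial k : ℝ)
              = ((Nat.factorial k * Nat.choose (M - 1) k : ℕ) : ℝ) := by push_cast; ring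
            _ ≤ ((M ^ k : ℕ) : ℝ) := by exact_mod_cast h1
            _ = (M : ℝ) ^ k := by push_cast; ring
        have hfac : (0:ℝ) < (Nat.factorial k : ℝ) := by positivity
        have hC' : ((Nat.choose (M - 1) k : ℝ)) ≤ (M : ℝ) ^ k / (Nat.factorial k : ℝ) :=
          (le_div_iff₀ hfac).2 hC
        have hpk : (0:ℝ) ≤ p ^ k := by positivity
        calc (M : ℝ) * ((Nat.choose (M - 1) k : ℝ) * p ^ k)
            ≤ (M : ℝ) * ((M : ℝ) ^ k / (Nat.factorial k : ℝ) * p ^ k) := by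
              refine mul_le_mul_of_nonneg_left (mul_le_mul_of_nonneg_right hC' hpk) ?_
              positivity
          _ = Bq α n := by
              rw [Bq, pow_succ]
              ring

theorem stmt_18 (α : ℝ) (hα : 0 < α) :
    ∃ f : ℕ → ℝ, Tendsto f atTop (nhds 0) ∧
      ∀ᶠ n : ℕ in atTop,
        ∀ (Ω : Type) (_ : MeasurableSpace Ω) (μ : Measure Ω), IsProbabilityMeasure μ →
          ∀ X : Fin (Nat.floor ((n : ℝ) / (Real.log n) ^ 3)) →
                Fin (Nat.floor ((n : ℝ) / (Real.log n) ^ 3)) → Ω → Bool,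
            (∀ u v, X u v = X v u) →
            iIndepFun
              (fun p : {q : Fin (Nat.floor ((n : ℝ) / (Real.log n) ^ 3)) ×
                            Fin (Nat.floor ((n : ℝ) / (Real.log n) ^ 3)) // q.1 < q.2} =>
                X p.1.1 p.1.2) μ →
            (∀ u v, u ≠ v → μ {ω | X u v ω = true} = ENNReal.ofReal (α * Real.log n / n)) →
            μ {ω | ∃ v, Real.log n / Real.log (Real.log n) ≤
                ((Finset.univ.filter fun u => u ≠ v ∧ X u v ω = true).card : ℝ)} ≤
              ENNReal.ofReal (Real.exp (-(2 - f n) * Real.log n)) ∧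
            μ {ω | ∃ v, Real.log n / Real.log (Real.log n) ≤
                ((Finset.univ.filter fun u => u ≠ v ∧ X u v ω = true).card : ℝ)} ≤
              1 / 10 := by
  refine ⟨fq α, tendsto_fq α hα, ?_⟩
  filter_upwards [stmt_aux α hα] with n hn
  obtain ⟨⟨h1, h2, h3⟩, hf, h10⟩ := hn
  intro Ω mΩ μ hμ X hsym hind hedge
  have hL0 : (0:ℝ) < Real.log n := by linarith
  have hn0 : (0:ℝ) < (n:ℝ) := by
    have : (10:ℝ) ≤ (n:ℝ) := by exact_mod_cast h10
    linarith
  have hbound := prob_bound α hα n (le_of_lt hL0) Ω mΩ μ hμ X hsym hind hedge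
  have hM1 : 1 ≤ Nat.floor ((n:ℝ) / (Real.log n) ^ 3) := by
    refine Nat.le_floor ?_
    push_cast
    linarith
  have hMpos : (0:ℝ) < ((Nat.floor ((n:ℝ) / (Real.log n) ^ 3) : ℕ) : ℝ) := by
    exact_mod_cast hM1
  have hppos : (0:ℝ) < α * Real.log n / n := by positivity
  have hB0 : 0 < Bq α n := by
    rw [Bq]
    exact div_pos (mul_pos (pow_pos hMpos _) (pow_pos hppos _)) (by positivity)
  have hexpB : Real.exp (-(2 - fq α n) * Real.log n) = Bq α n := by
    have harg : -(2 - fq α n) * Real.log n = Real.log (Bq α n) := by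
      rw [fq]
      field_simp
      ring
    rw [harg, Real.exp_log hB0]
  constructor
  · rw [hexpB]
    exact hbound
  · refine le_trans hbound ?_
    have hB110 : Bq α n ≤ 1/10 := by
      have hle : Bq α n ≤ Real.exp (-Real.log n) := by
        rw [← hexpB]
        apply Real.exp_le_exp.2
        nlinarith [hf, hL0]
      have hexpn : Real.exp (-Real.log n) = ((n:ℝ))⁻¹ := by
        rw [Real.exp_neg, Real.exp_log hn0]
      have h10' : (10:ℝ) ≤ (n:ℝ) := by exact_mod_cast h10
      have : ((n:ℝ))⁻¹ ≤ 1/10 := by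
        rw [inv_le_comm₀ (by linarith) (by norm_num)]
        simpa using h10'
      linarith [hle, hexpn ▸ hle]
    calc ENNReal.ofReal (Bq α n) ≤ ENNReal.ofReal (1/10) := ENNReal.ofReal_le_ofReal hB110
      _ = 1/10 := by
        rw [ENNReal.ofReal_div_of_pos (by norm_num), ENNReal.ofReal_one,
          ENNReal.ofReal_ofNat]
end
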